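/- Let f be holomorphic on a neighborhood of the closed disc B(z,r) in ℂ, with r > 0 and 1 ≤ p < ∞. Then there is a constant C depending only on p and r such that |f'(z)| ≤ C ((1/|B(z,r)|) ∫_{B(z,r)} |f(w) − f(z)|^p dA(w))^{1/p}. -/

import Mathlib

open MeasureTheory Metric Real Set

lemma holder_aux {p : ℝ} (hp : 1 ≤ p) {s : Set ℂ} (hs : MeasurableSet s)
    (hvol : volume s ≠ ⊤) {u : ℂ → ℝ} (hu0 : ∀ x, 0 ≤ u x)
    (hu : IntegrableOn u s) (hup : IntegrableOn (fun x => u x ^ p) s) :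
    ∫ x in s, u x ≤ (volume s).toReal ^ (1 - 1/p) * (∫ x in s, u x ^ p) ^ (1/p) := by
  rcases eq_or_lt_of_le hp with h1 | h1
  · subst h1
    simp [Real.rpow_one]
  · set q := Real.conjExponent p with hq
    have hpq : p.HolderConjugate q := Real.HolderConjugate.conjExponent h1
    set μ := volume.restrict s with hμ
    have hmeas : AEMeasurable (fun x => ENNReal.ofReal (u x)) μ :=
      hu.aemeasurable.ennreal_ofReal
    have key := ENNReal.lintegral_mul_le_Lp_mul_Lq μ hpq hmeas aemeasurable_const (g := fun _ => 1)
    simp only [Pi.mul_apply, mul_one, ENNReal.one_rpow, lintegral_const, one_mul] at key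
    have hμuniv : μ Set.univ = volume s := by
      rw [hμ, Measure.restrict_apply_univ]
    have e1 : ∫ x in s, u x = (∫⁻ x, ENNReal.ofReal (u x) ∂μ).toReal := by
      rw [integral_eq_lintegral_of_nonneg_ae (Filter.Eventually.of_forall (fun x => hu0 x))
        hu.aestronglyMeasurable]
    have e2 : ∫ x in s, u x ^ p = (∫⁻ x, ENNReal.ofReal (u x) ^ p ∂μ).toReal := by
      rw [integral_eq_lintegral_of_nonneg_ae
        (Filter.Eventually.of_forall (fun x => Real.rpow_nonneg (hu0 x) p))
        hup.aestronglyMeasurable]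
      congr 1
      apply lintegral_congr
      intro x
      rw [ENNReal.ofReal_rpow_of_nonneg (hu0 x) (le_trans zero_le_one hp)]
    have hfin : ∫⁻ x, ENNReal.ofReal (u x) ^ p ∂μ ≠ ⊤ := by
      have h := hup.lintegral_lt_top
      have : ∀ x, ENNReal.ofReal (u x ^ p) = ENNReal.ofReal (u x) ^ p := fun x =>
        (ENNReal.ofReal_rpow_of_nonneg (hu0 x) (le_trans zero_le_one hp)).symm
      rw [lintegral_congr this] at h
      exact h.ne
    have hq1 : 1 - 1/p = 1/q := by
      rw [one_div, one_div, hpq.one_sub_inv]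
    rw [e1, e2, hq1]
    calc (∫⁻ x, ENNReal.ofReal (u x) ∂μ).toReal
        ≤ ((∫⁻ x, ENNReal.ofReal (u x) ^ p ∂μ) ^ (1/p) * μ Set.univ ^ (1/q)).toReal := by
          apply ENNReal.toReal_mono _ key
          exact ENNReal.mul_ne_top
            (ENNReal.rpow_ne_top_of_nonneg (by positivity) hfin)
            (ENNReal.rpow_ne_top_of_nonneg hpq.symm.one_div_nonneg (hμuniv ▸ hvol))
      _ = (volume s).toReal ^ (1/q) * (∫⁻ x, ENNReal.ofReal (u x) ^ p ∂μ).toReal ^ (1/p) := by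
          rw [ENNReal.toReal_mul, ENNReal.toReal_rpow, ENNReal.toReal_rpow, hμuniv, mul_comm]


lemma circle_step {f : ℂ → ℂ} {z : ℂ} {U : Set ℂ} (hU : IsOpen U) {r t : ℝ}
    (hsub : closedBall z r ⊆ U) (hf : DifferentiableOn ℂ f U)
    (ht0 : 0 < t) (htr : t ≤ r) :
    2 * π * t * ‖deriv f z‖ ≤
      ∫ θ in (0:ℝ)..2*π, ‖f (circleMap z t θ) - f z‖ := by
  have hzU : z ∈ U := hsub (mem_closedBall_self (ht0.le.trans htr))
  set h : ℂ → ℂ := dslope f z with hh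
  have hhd : DifferentiableOn ℂ h U :=
    (Complex.differentiableOn_dslope (hU.mem_nhds hzU)).mpr hf
  have hdc : DiffContOnCl ℂ h (ball z t) := by
    apply DifferentiableOn.diffContOnCl
    exact hhd.mono ((closure_ball_subset_closedBall).trans
      ((closedBall_subset_closedBall htr).trans hsub))
  have cauchy := hdc.circleIntegral_sub_inv_smul (mem_ball_self ht0)
  have hnorm : ‖(2 * ↑π * Complex.I : ℂ) • h z‖ = 2 * π * ‖deriv f z‖ := by
    rw [norm_smul, hh, dslope_same]
    simp [pi_nonneg,
      abs_of_nonneg pi_nonneg]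
  have hptwise : ∀ θ : ℝ, ‖deriv (circleMap z t) θ •
      ((circleMap z t θ - z)⁻¹ • h (circleMap z t θ))‖
      = t⁻¹ * ‖f (circleMap z t θ) - f z‖ := by
    intro θ
    have hne : circleMap z t θ ≠ z := circleMap_ne_center ht0.ne'
    have habs : ‖circleMap z t θ - z‖ = t := by
      rw [circleMap_sub_center]
      simp [abs_of_pos ht0]
    rw [norm_smul, norm_smul, hh, dslope_of_ne _ hne, slope_def_field]
    simp only [deriv_circleMap, norm_mul, Complex.norm_I, norm_inv, habs]
    rw [div_eq_mul_inv, norm_mul, norm_inv, habs]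
    have : ‖circleMap 0 t θ‖ = t := by simp [abs_of_pos ht0]
    rw [this]
    field_simp
  have hle : 2 * π * ‖deriv f z‖ ≤
      t⁻¹ * ∫ θ in (0:ℝ)..2*π, ‖f (circleMap z t θ) - f z‖ := by
    calc 2 * π * ‖deriv f z‖ = ‖(2 * ↑π * Complex.I : ℂ) • h z‖ := hnorm.symm
      _ = ‖∮ w in C(z, t), (w - z)⁻¹ • h w‖ := by rw [cauchy]
      _ ≤ ∫ θ in (0:ℝ)..2*π, ‖deriv (circleMap z t) θ •
            ((circleMap z t θ - z)⁻¹ • h (circleMap z t θ))‖ := by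
          rw [circleIntegral]
          exact intervalIntegral.norm_integral_le_integral_norm (by positivity)
      _ = ∫ θ in (0:ℝ)..2*π, t⁻¹ * ‖f (circleMap z t θ) - f z‖ := by
          apply intervalIntegral.integral_congr
          intro θ _; exact hptwise θ
      _ = t⁻¹ * ∫ θ in (0:ℝ)..2*π, ‖f (circleMap z t θ) - f z‖ := by
          rw [← intervalIntegral.integral_const_mul]
  calc 2 * π * t * ‖deriv f z‖
      = t * (2 * π * ‖deriv f z‖) := by ring
    _ ≤ t * (t⁻¹ * ∫ θ in (0:ℝ)..2*π, ‖f (circleMap z t θ) - f z‖) :=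
        mul_le_mul_of_nonneg_left hle ht0.le
    _ = ∫ θ in (0:ℝ)..2*π, ‖f (circleMap z t θ) - f z‖ := by
        field_simp


lemma polar_symm_eq (t θ : ℝ) : Complex.polarCoord.symm (t, θ) = circleMap 0 t θ := by
  rw [Complex.polarCoord_symm_apply, circleMap, Complex.exp_mul_I]
  push_cast; ring

lemma annulus_step {f : ℂ → ℂ} {z : ℂ} {U : Set ℂ} (hU : IsOpen U) {r : ℝ} (hr : 0 < r)
    (hsub : closedBall z r ⊆ U) (hf : DifferentiableOn ℂ f U) :
    2 * π * (7/24 * r^3) * ‖deriv f z‖ ≤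
      ∫ w in ball z r, ‖f w - f z‖ := by
  have hcont : ContinuousOn f U := hf.continuousOn
  set D := ‖deriv f z‖ with hD
  set u : ℂ → ℝ := fun w => ‖f (z + w) - f z‖ with hu
  set A : Set ℂ := ball 0 r \ closedBall 0 (r/2) with hA
  set G : ℝ × ℝ → ℝ := fun q => q.1 * u (Complex.polarCoord.symm q) with hG
  -- continuity of the polar integrand near the annulus
  have hsymm_cont : Continuous (fun q : ℝ × ℝ => Complex.polarCoord.symm q) := by
    simp only [Complex.polarCoord_symm_apply]
    fun_prop
  have hmaps : MapsTo (fun q : ℝ × ℝ => z + Complex.polarCoord.symm q)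
      (Icc (r/2) r ×ˢ Icc (-π) π) (closedBall z r) := by
    rintro ⟨t, θ⟩ ⟨ht, hθ⟩
    simp only [mem_closedBall]
    rw [dist_eq_norm, add_sub_cancel_left, Complex.norm_polarCoord_symm]
    simp only [mem_Icc] at ht
    rw [abs_of_nonneg (le_trans (by positivity) ht.1)]
    exact ht.2
  have hGcont : ContinuousOn G (Icc (r/2) r ×ˢ Icc (-π) π) := by
    apply ContinuousOn.mul continuous_fst.continuousOn
    apply ContinuousOn.comp (t := closedBall z r)
      (f := fun q : ℝ × ℝ => z + Complex.polarCoord.symm q)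
      (g := fun w => ‖f w - f z‖)
    · exact continuous_norm.comp_continuousOn ((hcont.mono hsub).sub continuousOn_const)
    · exact (continuous_const.add hsymm_cont).continuousOn
    · exact hmaps
  have hGint : IntegrableOn G (Ioo (r/2) r ×ˢ Ioo (-π) π) := by
    apply IntegrableOn.mono_set
      (hGcont.integrableOn_compact (isCompact_Icc.prod isCompact_Icc))
    exact Set.prod_mono Ioo_subset_Icc_self Ioo_subset_Icc_self
  -- integrability of |f - f z| on the ball
  have hIball : IntegrableOn (fun w => ‖f w - f z‖) (ball z r) := by
    apply IntegrableOn.mono_set (t := closedBall z r) _ ball_subset_closedBall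
    exact (continuous_norm.comp_continuousOn
      ((hcont.mono hsub).sub continuousOn_const)).integrableOn_compact
      (isCompact_closedBall z r)
  -- step: polar identity
  have hind : ∀ q : ℝ × ℝ,
      (polarCoord.target).indicator (fun q => q.1 • (A.indicator u) (Complex.polarCoord.symm q)) q
      = (Ioo (r/2) r ×ˢ Ioo (-π) π).indicator G q := by
    rintro ⟨t, θ⟩
    by_cases hsmall : (t, θ) ∈ Ioo (r/2) r ×ˢ Ioo (-π) π
    · have hsm := hsmall
      obtain ⟨ht, hθ⟩ := hsmall
      simp only [mem_Ioo] at ht hθ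
      have ht0 : 0 < t := lt_trans (by positivity) ht.1
      have htarget : (t, θ) ∈ polarCoord.target := by
        rw [polarCoord_target]
        exact ⟨ht0, hθ⟩
      rw [indicator_of_mem htarget]
      have hmem : Complex.polarCoord.symm (t, θ) ∈ A := by
        constructor
        · rw [mem_ball_zero_iff, Complex.norm_polarCoord_symm]
          simpa [abs_of_pos ht0] using ht.2
        · rw [mem_closedBall_zero_iff, Complex.norm_polarCoord_symm]
          simpa [abs_of_pos ht0] using not_le.mpr ht.1
      rw [indicator_of_mem hmem, indicator_of_mem hsm]
      simp [hG, smul_eq_mul]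
    · rw [indicator_of_notMem hsmall]
      by_cases htar : (t, θ) ∈ polarCoord.target
      · rw [indicator_of_mem htar]
        have ht0 : 0 < t := by
          rw [polarCoord_target] at htar; exact htar.1
        have hθ : θ ∈ Ioo (-π) π := by
          rw [polarCoord_target] at htar; exact htar.2
        have htno : t ∉ Ioo (r/2) r := by
          intro hcon; exact hsmall ⟨hcon, hθ⟩
        have : Complex.polarCoord.symm (t, θ) ∉ A := by
          intro hcon
          apply htno
          obtain ⟨h1, h2⟩ := hcon
          rw [mem_ball_zero_iff, Complex.norm_polarCoord_symm,
            abs_of_pos ht0] at h1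
          rw [mem_closedBall_zero_iff, Complex.norm_polarCoord_symm,
            abs_of_pos ht0] at h2
          exact ⟨not_le.mp h2, h1⟩
        rw [indicator_of_notMem this]
        simp
      · rw [indicator_of_notMem htar]
  -- inner circle bound
  have step6 : ∀ t ∈ Ioo (r/2) r, 2 * π * t^2 * D ≤ ∫ θ in Ioo (-π) π, G (t, θ) := by
    intro t ht
    rw [mem_Ioo] at ht
    have ht0 : 0 < t := lt_trans (by positivity) ht.1
    have hueq : ∀ θ : ℝ, u (Complex.polarCoord.symm (t, θ))
        = ‖f (circleMap z t θ) - f z‖ := by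
      intro θ
      rw [polar_symm_eq]
      congr 2
      simp [circleMap]
    have per : Function.Periodic (fun θ => ‖f (circleMap z t θ) - f z‖) (2*π) :=
      (periodic_circleMap z t).comp (fun w => ‖f w - f z‖)
    have hIoo : ∫ θ in Ioo (-π) π, G (t, θ)
        = t * ∫ θ in (0:ℝ)..2*π, ‖f (circleMap z t θ) - f z‖ := by
      have e1 : ∫ θ in Ioo (-π) π, G (t, θ)
          = t * ∫ θ in Ioo (-π) π, ‖f (circleMap z t θ) - f z‖ := by
        rw [← integral_const_mul]
        apply setIntegral_congr_fun measurableSet_Ioo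
        intro θ _
        simp only [hG, hueq θ]
      rw [e1]
      congr 1
      rw [← integral_Ioc_eq_integral_Ioo,
        ← intervalIntegral.integral_of_le (by linarith [pi_pos] : -π ≤ π)]
      have := per.intervalIntegral_add_eq (-π) 0
      simp only [zero_add] at this
      rw [show -π + 2*π = π by ring] at this
      exact this
    rw [hIoo]
    have := circle_step hU hsub hf ht0 ht.2.le
    calc 2 * π * t^2 * D = t * (2 * π * t * D) := by ring
      _ ≤ t * ∫ θ in (0:ℝ)..2*π, ‖f (circleMap z t θ) - f z‖ :=
          mul_le_mul_of_nonneg_left this ht0.le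
  -- integrate over t
  have hGint' : Integrable G ((volume.restrict (Ioo (r/2) r)).prod (volume.restrict (Ioo (-π) π))) := by
    rw [Measure.prod_restrict]
    rw [← Measure.volume_eq_prod]
    exact hGint
  have hinner : IntegrableOn (fun t => ∫ θ in Ioo (-π) π, G (t, θ)) (Ioo (r/2) r) :=
    hGint'.integral_prod_left
  have step7 : 2 * π * (7/24 * r^3) * D ≤
      ∫ t in Ioo (r/2) r, ∫ θ in Ioo (-π) π, G (t, θ) := by
    have hc : ∫ t in Ioo (r/2) r, (2 * π * t^2 * D) = 2 * π * (7/24 * r^3) * D := by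
      rw [← integral_Ioc_eq_integral_Ioo,
        ← intervalIntegral.integral_of_le (by linarith : r/2 ≤ r)]
      have h1 : ∫ t in (r/2)..r, (2 * π * t^2 * D) = 2*π*D * ∫ t in (r/2)..r, t^2 := by
        rw [← intervalIntegral.integral_const_mul]
        congr 1; funext t; ring
      rw [h1, integral_pow]
      push_cast
      ring
    rw [← hc]
    apply setIntegral_mono_on
    · exact (((by fun_prop : Continuous (fun t : ℝ => 2 * π * t^2 * D)).continuousOn.integrableOn_compact
        isCompact_Icc).mono_set Ioo_subset_Icc_self)
    · exact hinner
    · exact measurableSet_Ioo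
    · exact step6
  -- put it together
  have hprod_eq : ∫ t in Ioo (r/2) r, ∫ θ in Ioo (-π) π, G (t, θ)
      = ∫ q in Ioo (r/2) r ×ˢ Ioo (-π) π, G q := by
    rw [Measure.volume_eq_prod, setIntegral_prod _ (by rw [← Measure.volume_eq_prod]; exact hGint)]
  have hpolar_eq : ∫ q in Ioo (r/2) r ×ˢ Ioo (-π) π, G q
      = ∫ w, A.indicator u w := by
    rw [← Complex.integral_comp_polarCoord_symm (A.indicator u)]
    rw [← integral_indicator polarCoord.open_target.measurableSet,
        ← integral_indicator ((measurableSet_Ioo.prod measurableSet_Ioo))]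
    exact (integral_congr_ae (Filter.Eventually.of_forall hind)).symm
  have htrans : ∫ w, A.indicator u w
      = ∫ w in (ball z r \ closedBall z (r/2)), ‖f w - f z‖ := by
    set B : Set ℂ := ball z r \ closedBall z (r/2) with hB
    set v : ℂ → ℝ := fun w => ‖f w - f z‖ with hv
    have hBA : ∀ w : ℂ, B.indicator v (z + w) = A.indicator u w := by
      intro w
      have hmem : z + w ∈ B ↔ w ∈ A := by
        simp only [hB, hA, mem_diff, mem_ball, mem_closedBall, dist_eq_norm,
          add_sub_cancel_left, sub_zero]
      by_cases hw : w ∈ A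
      · rw [indicator_of_mem hw, indicator_of_mem (hmem.mpr hw)]
      · rw [indicator_of_notMem hw, indicator_of_notMem (fun h => hw (hmem.mp h))]
    rw [← integral_indicator (measurableSet_ball.diff measurableSet_closedBall)]
    rw [← integral_add_left_eq_self (B.indicator v) z]
    exact (integral_congr_ae (Filter.Eventually.of_forall hBA)).symm
  have hmono : ∫ w in (ball z r \ closedBall z (r/2)), ‖f w - f z‖
      ≤ ∫ w in ball z r, ‖f w - f z‖ := by
    apply setIntegral_mono_set hIball
    · exact Filter.Eventually.of_forall (fun w => norm_nonneg _)
    · exact (diff_subset).eventuallyLE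
  calc 2 * π * (7/24 * r^3) * D
      ≤ ∫ t in Ioo (r/2) r, ∫ θ in Ioo (-π) π, G (t, θ) := step7
    _ = ∫ w in (ball z r \ closedBall z (r/2)), ‖f w - f z‖ := by
        rw [hprod_eq, hpolar_eq, htrans]
    _ ≤ ∫ w in ball z r, ‖f w - f z‖ := hmono


/-- Luecking's pointwise estimate: |f'(z)| ≤ C ((1/(πr²)) ∫_{B(z,r)} |f − f(z)|^p dA)^{1/p}
with C depending on p and r only, for f holomorphic near the closed disc. -/
theorem stmt6 (p r : ℝ) (hp : 1 ≤ p) (hr : 0 < r) :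
    ∃ C : ℝ, 0 < C ∧ ∀ (z : ℂ) (f : ℂ → ℂ),
      (∃ U : Set ℂ, IsOpen U ∧ Metric.closedBall z r ⊆ U ∧ DifferentiableOn ℂ f U) →
      ‖deriv f z‖ ≤
        C * ((1 / (Real.pi * r ^ 2)) *
          ∫ w in Metric.ball z r, ‖f w - f z‖ ^ p) ^ (1 / p) := by
  refine ⟨12 / (7 * r), by positivity, ?_⟩
  rintro z f ⟨U, hU, hsub, hfd⟩
  set D := ‖deriv f z‖ with hD
  set u : ℂ → ℝ := fun w => ‖f w - f z‖ with hu
  have hucont : ContinuousOn u (Metric.closedBall z r) :=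
    continuous_norm.comp_continuousOn
      (((hfd.continuousOn).mono hsub).sub continuousOn_const)
  have hu0 : ∀ x, 0 ≤ u x := fun x => norm_nonneg _
  have huI : IntegrableOn u (Metric.ball z r) :=
    (hucont.integrableOn_compact (isCompact_closedBall z r)).mono_set
      Metric.ball_subset_closedBall
  have hupI : IntegrableOn (fun w => u w ^ p) (Metric.ball z r) := by
    refine IntegrableOn.mono_set ?_ Metric.ball_subset_closedBall
    exact ((hucont.rpow_const (fun x _ => Or.inr (by linarith))).integrableOn_compact
      (isCompact_closedBall z r))
  have h1 : 2 * π * (7/24 * r^3) * D ≤ ∫ w in Metric.ball z r, u w :=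
    annulus_step hU hr hsub hfd
  have h2 : ∫ w in Metric.ball z r, u w ≤
      (volume (Metric.ball z r)).toReal ^ (1 - 1/p) *
        (∫ w in Metric.ball z r, u w ^ p) ^ (1/p) :=
    holder_aux hp measurableSet_ball (measure_ball_lt_top).ne hu0 huI hupI
  have hV : (volume (Metric.ball z r)).toReal = π * r^2 := by
    rw [Complex.volume_ball]
    rw [ENNReal.toReal_mul, ENNReal.toReal_pow, ENNReal.toReal_ofReal hr.le]
    simp [Real.pi, mul_comm]
  set Ip := ∫ w in Metric.ball z r, u w ^ p with hIp
  have hIp0 : 0 ≤ Ip := integral_nonneg (fun w => Real.rpow_nonneg (hu0 w) p)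
  have hV0 : (0:ℝ) < π * r^2 := by positivity
  set vp := (π * r^2) ^ (1/p) with hvp
  have hvp0 : 0 < vp := Real.rpow_pos_of_pos hV0 _
  set a := Ip ^ (1/p) with ha
  have ha0 : 0 ≤ a := Real.rpow_nonneg hIp0 _
  have hVexp : (π * r^2 : ℝ) ^ (1 - 1/p) = (π * r^2) / vp := by
    rw [Real.rpow_sub hV0, Real.rpow_one]
  have h2' : ∫ w in Metric.ball z r, u w ≤ (π * r^2) / vp * a := by
    rw [← hVexp]
    calc ∫ w in Metric.ball z r, u w
        ≤ (volume (Metric.ball z r)).toReal ^ (1 - 1/p) * Ip ^ (1/p) := h2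
      _ = (π * r^2 : ℝ) ^ (1 - 1/p) * a := by rw [hV]
  have hDle : 2 * π * (7/24 * r^3) * D ≤ (π * r^2) / vp * a := le_trans h1 h2'
  have hkey : (1 / (π * r ^ 2) * Ip) ^ (1/p) = vp⁻¹ * a := by
    rw [Real.mul_rpow (by positivity) hIp0, one_div (π * r^2), Real.inv_rpow hV0.le]
  have hgoal : D ≤ 12 / (7 * r) * (vp⁻¹ * a) := by
    rw [show (12 / (7 * r) * (vp⁻¹ * a) : ℝ)
        = ((π * r^2) / vp * a) / (2 * π * (7/24 * r^3)) from by
      field_simp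
      ring]
    rw [le_div_iff₀ (by positivity)]
    nlinarith [hDle]
  calc D ≤ 12 / (7 * r) * (vp⁻¹ * a) := hgoal
    _ = 12 / (7 * r) * ((1 / (π * r ^ 2) * Ip) ^ (1/p)) := by rw [hkey]
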